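/- Let C be a nonempty (n,d,w) constant-weight code with d even and d < 2w ≤ n. Then for every codeword c ∈ C and every integer i with d/2 ≤ i ≤ w, |S_{2i}(c)| ≤ T(i, w, i, n−w, d). -/

import Mathlib

/-- The number of ones of a binary vector. -/
def wtOnes {n : ℕ} (u : Fin n → ZMod 2) : ℕ :=
  (Finset.univ.filter (fun t => u t = 1)).card

/-- `C` is an `(n,d,w)` constant-weight binary code. -/
def IsCWCode (n d w : ℕ) (C : Finset (Fin n → ZMod 2)) : Prop :=
  (∀ c ∈ C, wtOnes c = w) ∧
  ∀ u ∈ C, ∀ v ∈ C, u ≠ v → d ≤ hammingDist u v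

/-- `A n d w`: the largest possible size of an `(n,d,w)` constant-weight code. -/
noncomputable def A (n d w : ℕ) : ℕ :=
  sSup {M | ∃ C : Finset (Fin n → ZMod 2), IsCWCode n d w C ∧ C.card = M}

/-- `C` is a `(w1,n1,w2,n2,d)` doubly-constant-weight binary code. -/
def IsDCWCode (w1 n1 w2 n2 d : ℕ) (C : Finset (Fin n1 ⊕ Fin n2 → ZMod 2)) : Prop :=
  (∀ c ∈ C,
    (Finset.univ.filter (fun t : Fin n1 => c (Sum.inl t) = 1)).card = w1 ∧
    (Finset.univ.filter (fun t : Fin n2 => c (Sum.inr t) = 1)).card = w2) ∧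
  ∀ u ∈ C, ∀ v ∈ C, u ≠ v → d ≤ hammingDist u v

/-- `T w1 n1 w2 n2 d`: the largest possible size of a `(w1,n1,w2,n2,d)`
doubly-constant-weight code. -/
noncomputable def T (w1 n1 w2 n2 d : ℕ) : ℕ :=
  sSup {M | ∃ C : Finset (Fin n1 ⊕ Fin n2 → ZMod 2), IsDCWCode w1 n1 w2 n2 d C ∧ C.card = M}

/-- `S_i(c)`: the set of codewords of `C` at distance `i` from `c`. -/
def Sdist {n : ℕ} (C : Finset (Fin n → ZMod 2)) (c : Fin n → ZMod 2) (i : ℕ) :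
    Finset (Fin n → ZMod 2) :=
  C.filter (fun u => hammingDist u c = i)

/-- The distance distribution `A_i = (1/|C|) ∑_{c ∈ C} |S_i(c)|` of a code `C`. -/
noncomputable def distDistr {n : ℕ} (C : Finset (Fin n → ZMod 2)) (i : ℕ) : ℚ :=
  (∑ c ∈ C, ((Sdist C c i).card : ℚ)) / (C.card : ℚ)

/-- `V_i`: vectors of `F^n` with exactly `i` ones on the first `w` coordinates and
exactly `i` ones on the last `n - w` coordinates. -/
def Vset (n w i : ℕ) : Finset (Fin n → ZMod 2) :=
  Finset.univ.filter (fun u =>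
    (Finset.univ.filter (fun t : Fin n => t.val < w ∧ u t = 1)).card = i ∧
    (Finset.univ.filter (fun t : Fin n => w ≤ t.val ∧ u t = 1)).card = i)

/-- `m_{i,j} = max { d(u,v) : u ∈ V_i, v ∈ V_j }`. -/
def mMax (n w i j : ℕ) : ℕ :=
  ((Vset n w i) ×ˢ (Vset n w j)).sup fun p => hammingDist p.1 p.2

/-- `P⁻_k(n;x) = ∑_{j odd} C(x,j) C(n-x,k-j)`. -/
def Pminus (k n x : ℕ) : ℕ :=
  ∑ j ∈ Finset.range (k + 1), if Odd j then x.choose j * (n - x).choose (k - j) else 0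

/-- `P⁺_k(n;x) = ∑_{j even} C(x,j) C(n-x,k-j)`. -/
def Pplus (k n x : ℕ) : ℕ :=
  ∑ j ∈ Finset.range (k + 1), if Even j then x.choose j * (n - x).choose (k - j) else 0

/-- The Krawtchouk polynomial `P_k(n;x) = ∑_j (-1)^j C(x,j) C(n-x,k-j)` at integer points. -/
def Kraw (k n x : ℕ) : ℤ :=
  ∑ j ∈ Finset.range (k + 1), (-1 : ℤ) ^ j * x.choose j * (n - x).choose (k - j)

/-- For a nonempty `(n,d,w)` constant-weight code `C` with `d` even and
`d < 2w ≤ n`, every `c ∈ C` and every `d/2 ≤ i ≤ w` satisfy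
`|S_{2i}(c)| ≤ T(i,w,i,n-w,d)`. -/
lemma ham_comp_equiv {α β : Type*} [Fintype α] [Fintype β] (e : α ≃ β)
    (f g : β → ZMod 2) : hammingDist (f ∘ e) (g ∘ e) = hammingDist f g := by
  simp only [hammingDist]
  apply Finset.card_bij' (fun a _ => e a) (fun b _ => e.symm b) <;> simp

theorem Sdist_le_T (n d w i : ℕ) (C : Finset (Fin n → ZMod 2)) (hC : C.Nonempty)
    (hcode : IsCWCode n d w C) (hd : Even d) (hdw : d < 2 * w) (hwn : 2 * w ≤ n)
    (c : Fin n → ZMod 2) (hc : c ∈ C) (hi : d / 2 ≤ i) (hi' : i ≤ w) :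
    (Sdist C c (2 * i)).card ≤ T i w i (n - w) d := by
  classical
  obtain ⟨hw, hdist⟩ := hcode
  have hwc : (Finset.univ.filter (fun t : Fin n => c t = 1)).card = w := hw c hc
  have hsplit := Finset.card_filter_add_card_filter_not
    (s := (Finset.univ : Finset (Fin n))) (p := fun t : Fin n => c t = 1)
  have hcard1 : Fintype.card {t : Fin n // c t = 1} = w := by
    rw [Fintype.card_subtype]; exact hwc
  have hcard2 : Fintype.card {t : Fin n // ¬ c t = 1} = n - w := by
    rw [Fintype.card_subtype]
    simp only [Finset.card_univ, Fintype.card_fin] at hsplit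
    omega
  set e1 := Fintype.equivFinOfCardEq hcard1 with he1
  set e2 := Fintype.equivFinOfCardEq hcard2 with he2
  set e : Fin n ≃ Fin w ⊕ Fin (n - w) :=
    (Equiv.sumCompl (fun t : Fin n => c t = 1)).symm.trans (Equiv.sumCongr e1 e2) with he
  have heinl : ∀ t : Fin w, (e.symm (Sum.inl t) : Fin n) = (e1.symm t : Fin n) := by
    intro t; simp [he]
  have heinr : ∀ t : Fin (n - w), (e.symm (Sum.inr t) : Fin n) = (e2.symm t : Fin n) := by
    intro t; simp [he]
  set Φ : (Fin n → ZMod 2) → (Fin w ⊕ Fin (n - w) → ZMod 2) :=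
    fun u s => u (e.symm s) + c (e.symm s) with hΦ
  have hΦinj : Function.Injective Φ := by
    intro u v h
    funext r
    have := congrFun h (e r)
    simp only [hΦ, Equiv.symm_apply_apply] at this
    exact add_right_cancel this
  set D := (Sdist C c (2 * i)).image Φ with hD
  have hDcard : D.card = (Sdist C c (2 * i)).card :=
    Finset.card_image_of_injective _ hΦinj
  -- key counting for u in Sdist
  have hkey : ∀ u ∈ Sdist C c (2 * i),
      (Finset.univ.filter (fun t : Fin n => c t = 1 ∧ ¬ u t = 1)).card = i ∧
      (Finset.univ.filter (fun t : Fin n => ¬ c t = 1 ∧ u t = 1)).card = i := by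
    intro u hu
    rw [Sdist, Finset.mem_filter] at hu
    obtain ⟨huC, hud⟩ := hu
    have hwu : (Finset.univ.filter (fun t : Fin n => u t = 1)).card = w := hw u huC
    have h1 := Finset.card_filter_add_card_filter_not
      (s := Finset.univ.filter (fun t : Fin n => c t = 1)) (p := fun t : Fin n => u t = 1)
    have h2 := Finset.card_filter_add_card_filter_not
      (s := Finset.univ.filter (fun t : Fin n => u t = 1)) (p := fun t : Fin n => c t = 1)
    have h3 := Finset.card_filter_add_card_filter_not
      (s := Finset.univ.filter (fun t : Fin n => u t ≠ c t)) (p := fun t : Fin n => c t = 1)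
    rw [Finset.filter_filter, Finset.filter_filter, hwc] at h1
    rw [Finset.filter_filter, Finset.filter_filter, hwu] at h2
    rw [Finset.filter_filter, Finset.filter_filter] at h3
    have hham : (Finset.univ.filter (fun t : Fin n => u t ≠ c t)).card = 2 * i := hud
    rw [hham] at h3
    have e1' : (Finset.univ.filter (fun t : Fin n => u t ≠ c t ∧ c t = 1))
        = Finset.univ.filter (fun t : Fin n => c t = 1 ∧ ¬ u t = 1) := by
      apply Finset.filter_congr
      intro t _
      have : ∀ x y : ZMod 2, (x ≠ y ∧ y = 1) ↔ (y = 1 ∧ ¬ x = 1) := by decide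
      exact this (u t) (c t)
    have e2' : (Finset.univ.filter (fun t : Fin n => u t ≠ c t ∧ ¬ c t = 1))
        = Finset.univ.filter (fun t : Fin n => ¬ c t = 1 ∧ u t = 1) := by
      apply Finset.filter_congr
      intro t _
      have : ∀ x y : ZMod 2, (x ≠ y ∧ ¬ y = 1) ↔ (¬ y = 1 ∧ x = 1) := by decide
      exact this (u t) (c t)
    have e3' : (Finset.univ.filter (fun t : Fin n => u t = 1 ∧ ¬ c t = 1))
        = Finset.univ.filter (fun t : Fin n => ¬ c t = 1 ∧ u t = 1) := by
      apply Finset.filter_congr; intro t _; tauto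
    have e4' : (Finset.univ.filter (fun t : Fin n => u t = 1 ∧ c t = 1))
        = Finset.univ.filter (fun t : Fin n => c t = 1 ∧ u t = 1) := by
      apply Finset.filter_congr; intro t _; tauto
    rw [e1', e2'] at h3
    rw [e3', e4'] at h2
    omega
  -- the image code is a DCW code
  have hDCW : IsDCWCode i w i (n - w) d D := by
    constructor
    · intro v hv
      rw [hD, Finset.mem_image] at hv
      obtain ⟨u, hu, rfl⟩ := hv
      obtain ⟨hb1, hb2⟩ := hkey u hu
      constructor
      · rw [← hb1]
        refine Finset.card_bij' (fun (t : Fin w) _ => ((e1.symm t : {t : Fin n // c t = 1}) : Fin n))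
          (fun (r : Fin n) hr => e1 ⟨r, ((Finset.mem_filter.1 hr).2).1⟩) ?_ ?_ ?_ ?_
        · intro t ht
          rw [Finset.mem_filter] at ht ⊢
          refine ⟨Finset.mem_univ _, (e1.symm t).2, ?_⟩
          have h1 : c ((e1.symm t : {t : Fin n // c t = 1}) : Fin n) = 1 := (e1.symm t).2
          have := ht.2
          simp only [hΦ, heinl, h1] at this
          intro hcon
          rw [hcon] at this
          exact absurd this (by decide)
        · intro r hr
          rw [Finset.mem_filter] at hr ⊢
          refine ⟨Finset.mem_univ _, ?_⟩
          obtain ⟨_, hc1, hu1⟩ := hr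
          simp only [hΦ, heinl, Equiv.symm_apply_apply]
          rw [hc1]
          have : ∀ x : ZMod 2, ¬ x = 1 → x + 1 = 1 := by decide
          exact this _ hu1
        · intro t ht
          exact (Equiv.apply_eq_iff_eq_symm_apply e1).mpr (Subtype.ext rfl)
        · intro r hr
          simp
      · rw [← hb2]
        refine Finset.card_bij'
          (fun (t : Fin (n - w)) _ => ((e2.symm t : {t : Fin n // ¬ c t = 1}) : Fin n))
          (fun (r : Fin n) hr => e2 ⟨r, ((Finset.mem_filter.1 hr).2).1⟩) ?_ ?_ ?_ ?_
        · intro t ht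
          rw [Finset.mem_filter] at ht ⊢
          refine ⟨Finset.mem_univ _, (e2.symm t).2, ?_⟩
          have h0 : ¬ c ((e2.symm t : {t : Fin n // ¬ c t = 1}) : Fin n) = 1 := (e2.symm t).2
          have hc0 : c ((e2.symm t : {t : Fin n // ¬ c t = 1}) : Fin n) = 0 := by
            generalize c _ = x at h0 ⊢; revert x; decide
          have := ht.2
          simp only [hΦ, heinr, hc0, add_zero] at this
          exact this
        · intro r hr
          rw [Finset.mem_filter] at hr ⊢
          refine ⟨Finset.mem_univ _, ?_⟩
          obtain ⟨_, hc1, hu1⟩ := hr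
          simp only [hΦ, heinr, Equiv.symm_apply_apply]
          have hc0 : c r = 0 := by
            generalize c r = x at hc1 ⊢; revert x; decide
          rw [hc0, add_zero]; exact hu1
        · intro t ht
          exact (Equiv.apply_eq_iff_eq_symm_apply e2).mpr (Subtype.ext rfl)
        · intro r hr
          simp
    · intro x hx y hy hxy
      rw [hD, Finset.mem_image] at hx hy
      obtain ⟨u, hu, rfl⟩ := hx
      obtain ⟨v, hv, rfl⟩ := hy
      have huv : u ≠ v := fun h => hxy (by rw [h])
      have hdle : d ≤ hammingDist u v :=
        hdist u ((Finset.mem_filter.1 hu).1) v ((Finset.mem_filter.1 hv).1) huv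
      have : hammingDist (Φ u) (Φ v) = hammingDist u v := by
        have hcomp : Φ u = (fun r => u r + c r) ∘ e.symm := rfl
        have hcomp' : Φ v = (fun r => v r + c r) ∘ e.symm := rfl
        rw [hcomp, hcomp', ham_comp_equiv e.symm]
        simp only [hammingDist, ne_eq, add_left_inj]
      omega
  -- conclude via le_csSup
  rw [← hDcard]
  apply le_csSup
  · refine ⟨Fintype.card (Fin w ⊕ Fin (n - w) → ZMod 2), ?_⟩
    rintro M ⟨C', _, rfl⟩
    exact Finset.card_le_univ C'
  · exact ⟨D, hDCW, rfl⟩
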